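/- There exist constants such that for all real a, b and σ > 0, the total variation distance between N(a, σ²) and N(b, σ²) satisfies 0.78 · min{|a − b|/(√(2π)σ), 1} ≤ ‖N(a,σ²) − N(b,σ²)‖_TV ≤ min{|a − b|/(√(2π)σ), 1}. -/

import Mathlib

open MeasureTheory ProbabilityTheory Real
open scoped NNReal ENNReal

/-- Total variation distance between two measures. -/
noncomputable def tvDist {E : Type*} [MeasurableSpace E] (P Q : Measure E) : ℝ :=
  ⨆ A : {s : Set E // MeasurableSet s}, ((P A).toReal - (Q A).toReal)

lemma exp_neg_quad_bound (w : ℝ) (hw : 0 ≤ w) : Real.exp (-w) ≤ 1 - w + w^2/2 := by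
  have h : MonotoneOn (fun w : ℝ => (1 - w + w^2/2) - Real.exp (-w)) (Set.Ici 0) := by
    apply monotoneOn_of_hasDerivWithinAt_nonneg (convex_Ici 0)
      (f' := fun x => (-1 + x) + Real.exp (-x))
    · fun_prop
    · intro x _
      have h1 : HasDerivAt (fun w : ℝ => Real.exp (-w)) (-Real.exp (-x)) x := by
        exact (hasDerivAt_neg x).exp.congr_deriv (by ring)
      have h2 : HasDerivAt (fun w : ℝ => 1 - w + w^2/2) (-1 + x) x := by
        have := (((hasDerivAt_id x).const_sub 1).add
          (((hasDerivAt_pow 2 x)).div_const 2))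
        exact this.congr_deriv (by norm_num)
      have := h2.sub h1
      refine this.hasDerivWithinAt.congr_deriv ?_
      ring
    · intro x hx
      simp only [interior_Ici, Set.mem_Ioi] at hx
      have := Real.add_one_le_exp (-x)
      linarith
  have h0 := h (Set.self_mem_Ici) (Set.mem_Ici.mpr hw) hw
  simp at h0
  linarith

lemma exp_neg_cubic_bound (w : ℝ) (hw : 0 ≤ w) :
    1 - w + w^2/2 - w^3/6 ≤ Real.exp (-w) := by
  have h : MonotoneOn (fun w : ℝ => Real.exp (-w) - (1 - w + w^2/2 - w^3/6)) (Set.Ici 0) := by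
    apply monotoneOn_of_hasDerivWithinAt_nonneg (convex_Ici 0)
      (f' := fun x => -Real.exp (-x) + (1 - x + x^2/2))
    · fun_prop
    · intro x _
      have h1 : HasDerivAt (fun w : ℝ => Real.exp (-w)) (-Real.exp (-x)) x := by
        exact (hasDerivAt_neg x).exp.congr_deriv (by ring)
      have h2 : HasDerivAt (fun w : ℝ => 1 - w + w^2/2 - w^3/6) (-1 + x - x^2/2) x := by
        have := ((((hasDerivAt_id x).const_sub 1).add
          ((hasDerivAt_pow 2 x).div_const 2)).sub ((hasDerivAt_pow 3 x).div_const 6))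
        refine this.congr_deriv ?_
        norm_num
        ring
      have := h1.sub h2
      refine this.hasDerivWithinAt.congr_deriv ?_
      ring
    · intro x hx
      simp only [interior_Ici, Set.mem_Ioi] at hx
      have := exp_neg_quad_bound x hx.le
      linarith
  have h0 := h (Set.self_mem_Ici) (Set.mem_Ici.mpr hw) hw
  simp at h0
  linarith

lemma key_poly (u : ℝ) (h0 : 0 ≤ u) (h : u ≤ π/2) :
    0.78 ≤ 1 - u/6 + u^2/40 - u^3/336 := by
  have hpi : π < 3.15 := by
    have := Real.pi_lt_d2
    linarith
  nlinarith [sq_nonneg u, sq_nonneg (u - 1.575), mul_nonneg h0 h0,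
    mul_nonneg (mul_nonneg h0 h0) h0]

lemma intervalIntegral_poly (c d1 d2 d3 : ℝ) :
    ∫ x in (-c)..c, (1 - x^2/d1 + x^4/d2 - x^6/d3) =
      2*c - (2/3)*c^3/d1 + (2/5)*c^5/d2 - (2/7)*c^7/d3 := by
  have h2 : IntervalIntegrable (fun x : ℝ => x^2/d1) volume (-c) c :=
    ((continuous_pow 2).div_const d1).intervalIntegrable _ _
  have h4 : IntervalIntegrable (fun x : ℝ => x^4/d2) volume (-c) c :=
    ((continuous_pow 4).div_const d2).intervalIntegrable _ _
  have h6 : IntervalIntegrable (fun x : ℝ => x^6/d3) volume (-c) c :=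
    ((continuous_pow 6).div_const d3).intervalIntegrable _ _
  have hone : IntervalIntegrable (fun _ : ℝ => (1:ℝ)) volume (-c) c :=
    intervalIntegrable_const
  rw [intervalIntegral.integral_sub ((hone.sub h2).add h4) h6,
    intervalIntegral.integral_add (hone.sub h2) h4,
    intervalIntegral.integral_sub hone h2]
  simp only [intervalIntegral.integral_div, integral_pow, integral_one]
  norm_num
  ring

lemma tvDist_term_le_one {E : Type*} [MeasurableSpace E] (P Q : Measure E)
    [IsProbabilityMeasure P] : ∀ A : {s : Set E // MeasurableSet s},
      ((P A).toReal - (Q A).toReal) ≤ 1 := by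
  intro A
  have h1 : (P ↑A).toReal ≤ 1 := by
    simpa using ENNReal.toReal_mono (by simp) (prob_le_one (μ := P) (s := A))
  have h2 : (0:ℝ) ≤ (Q ↑A).toReal := ENNReal.toReal_nonneg
  linarith

lemma tvDist_comm {E : Type*} [MeasurableSpace E] (P Q : Measure E)
    [IsProbabilityMeasure P] [IsProbabilityMeasure Q] : tvDist P Q = tvDist Q P := by
  have key : ∀ (P Q : Measure E), IsProbabilityMeasure P → IsProbabilityMeasure Q →
      tvDist P Q ≤ tvDist Q P := by
    intro P Q hP hQ
    apply ciSup_le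
    rintro ⟨A, hA⟩
    have hb : BddAbove (Set.range fun B : {s : Set E // MeasurableSet s} =>
        ((Q B).toReal - (P B).toReal)) := by
      refine ⟨1, ?_⟩
      rintro x ⟨B, rfl⟩
      exact tvDist_term_le_one Q P B
    have hle := le_ciSup hb ⟨Aᶜ, hA.compl⟩
    refine le_trans (le_of_eq ?_) hle
    have hPc : (P Aᶜ).toReal = 1 - (P A).toReal := by
      rw [measure_compl hA (measure_ne_top _ _), measure_univ,
        ENNReal.toReal_sub_of_le prob_le_one (by simp)]
      simp
    have hQc : (Q Aᶜ).toReal = 1 - (Q A).toReal := by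
      rw [measure_compl hA (measure_ne_top _ _), measure_univ,
        ENNReal.toReal_sub_of_le prob_le_one (by simp)]
      simp
    simp only [hPc, hQc]
    ring
  exact le_antisymm (key P Q inferInstance inferInstance) (key Q P inferInstance inferInstance)

lemma heq1_aux (C t1 σ u : ℝ) (hσ : σ ≠ 0) (hu : u = t1^2/σ^2) :
    C * (2*t1 - (2/3)*t1^3/(2*σ^2) + (2/5)*t1^5/(8*σ^4) - (2/7)*t1^7/(48*σ^6))
      = 2*C*t1*(1 - u/6 + u^2/40 - u^3/336) := by
  subst hu
  field_simp
  ring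

set_option maxHeartbeats 1000000 in
lemma tv_gaussian_aux (a b : ℝ) (σ : ℝ) (hσ : 0 < σ) (hab : b ≤ a) :
    0.78 * min (|a - b| / (Real.sqrt (2 * π) * σ)) 1
      ≤ tvDist (gaussianReal a (Real.toNNReal (σ ^ 2))) (gaussianReal b (Real.toNNReal (σ ^ 2)))
    ∧ tvDist (gaussianReal a (Real.toNNReal (σ ^ 2))) (gaussianReal b (Real.toNNReal (σ ^ 2)))
      ≤ min (|a - b| / (Real.sqrt (2 * π) * σ)) 1 := by
  set v : ℝ≥0 := Real.toNNReal (σ ^ 2) with hv_def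
  have hσ2 : (0:ℝ) < σ^2 := by positivity
  have hv : v ≠ 0 := by
    simp only [hv_def, ne_eq, Real.toNNReal_eq_zero, not_le]
    exact hσ2
  have hvc : (v:ℝ) = σ^2 := Real.coe_toNNReal _ hσ2.le
  set f : ℝ → ℝ := gaussianPDFReal a v with hf_def
  set g : ℝ → ℝ := gaussianPDFReal b v with hg_def
  have hf_int : Integrable f := integrable_gaussianPDFReal a v
  have hg_int : Integrable g := integrable_gaussianPDFReal b v
  set m : ℝ := (a + b) / 2 with hm_def
  set t : ℝ := (a - b) / 2 with ht_def
  have ht : 0 ≤ t := by rw [ht_def]; linarith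
  have habs : |a - b| = 2 * t := by rw [abs_of_nonneg (by linarith)]; rw [ht_def]; ring
  set C : ℝ := (Real.sqrt (2 * π) * σ)⁻¹ with hC_def
  have h2π : (0:ℝ) < Real.sqrt (2*π) := Real.sqrt_pos.mpr (by positivity)
  have hC_pos : 0 < C := by rw [hC_def]; positivity
  -- measure applied to set as integral of density
  have happ : ∀ (μ : ℝ) (s : Set ℝ),
      ((gaussianReal μ v) s).toReal = ∫ x in s, gaussianPDFReal μ v x := by
    intro μ s
    rw [gaussianReal_apply_eq_integral μ hv s,
      ENNReal.toReal_ofReal (integral_nonneg (fun x => gaussianPDFReal_nonneg μ v x))]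
  -- pointwise comparison of densities
  have hfg : ∀ x ∈ Set.Ici m, g x ≤ f x := by
    intro x hx
    simp only [Set.mem_Ici, hm_def] at hx
    rw [hf_def, hg_def]
    unfold gaussianPDFReal
    apply mul_le_mul_of_nonneg_left _ (inv_nonneg.mpr (Real.sqrt_nonneg _))
    apply Real.exp_le_exp.mpr
    rw [hvc]
    rw [div_le_div_iff_of_pos_right (by positivity)]
    nlinarith
  have hgf : ∀ x, x ∉ Set.Ici m → f x ≤ g x := by
    intro x hx
    simp only [Set.mem_Ici, not_le, hm_def] at hx
    rw [hf_def, hg_def]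
    unfold gaussianPDFReal
    apply mul_le_mul_of_nonneg_left _ (inv_nonneg.mpr (Real.sqrt_nonneg _))
    apply Real.exp_le_exp.mpr
    rw [hvc]
    rw [div_le_div_iff_of_pos_right (by positivity)]
    nlinarith
  set S : Set ℝ := Set.Ici m with hS_def
  have hS_meas : MeasurableSet S := measurableSet_Ici
  set D : ℝ := ∫ x in S, (f x - g x) with hD_def
  -- every measurable set gives at most D
  have hA_le : ∀ A : Set ℝ, MeasurableSet A → ∫ x in A, (f x - g x) ≤ D := by
    intro A hA
    have hint : Integrable (fun x => f x - g x) := hf_int.sub hg_int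
    have hsplit : (∫ x in A ∩ S, (f x - g x)) + ∫ x in A \ S, (f x - g x)
        = ∫ x in A, (f x - g x) := integral_inter_add_diff (s := A) hS_meas hint.integrableOn
    have hneg : ∫ x in A \ S, (f x - g x) ≤ 0 := by
      apply setIntegral_nonpos (hA.diff hS_meas)
      intro x hx
      have := hgf x hx.2
      linarith
    have hmono : ∫ x in A ∩ S, (f x - g x) ≤ D := by
      rw [hD_def]
      apply setIntegral_mono_set hint.integrableOn
      · apply ae_restrict_of_forall_mem hS_meas
        intro x hx
        have := hfg x hx
        simp only [Pi.zero_apply]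
        linarith
      · exact HasSubset.Subset.eventuallyLE Set.inter_subset_right
    linarith
  -- tvDist equals D
  have htv : tvDist (gaussianReal a v) (gaussianReal b v) = D := by
    apply le_antisymm
    · apply ciSup_le
      rintro ⟨A, hA⟩
      show ((gaussianReal a v) A).toReal - ((gaussianReal b v) A).toReal ≤ D
      rw [happ, happ, ← integral_sub hf_int.integrableOn hg_int.integrableOn]
      exact hA_le A hA
    · have hbdd : BddAbove (Set.range fun B : {s : Set ℝ // MeasurableSet s} =>
          (((gaussianReal a v) B).toReal - ((gaussianReal b v) B).toReal)) := by
        refine ⟨D, ?_⟩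
        rintro x ⟨B, rfl⟩
        show ((gaussianReal a v) B).toReal - ((gaussianReal b v) B).toReal ≤ D
        rw [happ, happ, ← integral_sub hf_int.integrableOn hg_int.integrableOn]
        exact hA_le B B.2
      have hle := le_ciSup hbdd ⟨S, hS_meas⟩
      refine le_trans ?_ hle
      show D ≤ ((gaussianReal a v) S).toReal - ((gaussianReal b v) S).toReal
      rw [happ, happ, ← integral_sub hf_int.integrableOn hg_int.integrableOn]
  -- shift the integrals to centered gaussian
  set φ : ℝ → ℝ := gaussianPDFReal 0 v with hφ_def
  have hφ_int : Integrable φ := integrable_gaussianPDFReal 0 v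
  have hφ_nonneg : ∀ x, 0 ≤ φ x := fun x => gaussianPDFReal_nonneg 0 v x
  have hshift : ∀ (μ c : ℝ), ∫ x in Set.Ici c, gaussianPDFReal μ v x
      = ∫ x in Set.Ici (c - μ), φ x := by
    intro μ c
    have hmp : MeasurePreserving (fun x : ℝ => x + μ) volume volume :=
      measurePreserving_add_right volume μ
    have hemb : MeasurableEmbedding (fun x : ℝ => x + μ) :=
      (Homeomorph.addRight μ).measurableEmbedding
    have hpre : (fun x : ℝ => x + μ) ⁻¹' (Set.Ici c) = Set.Ici (c - μ) := by
      ext x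
      simp only [Set.mem_preimage, Set.mem_Ici]
      constructor <;> intro h <;> linarith
    have h := hmp.setIntegral_preimage_emb hemb (gaussianPDFReal μ v) (Set.Ici c)
    rw [hpre] at h
    rw [← h]
    apply setIntegral_congr_fun measurableSet_Ici
    intro x _
    show gaussianPDFReal μ v (x + μ) = φ x
    rw [gaussianPDFReal_add x μ]
    simp [hφ_def]
  have hIci_a : ∫ x in S, f x = ∫ x in Set.Ici (-t), φ x := by
    rw [hf_def, hS_def, hshift a m]
    congr 2
    rw [hm_def, ht_def]; ring
  have hIci_b : ∫ x in S, g x = ∫ x in Set.Ici t, φ x := by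
    rw [hg_def, hS_def, hshift b m]
    congr 2
    rw [hm_def, ht_def]; ring
  -- D as an interval integral
  have hD_split : D = ∫ x in Set.Ico (-t) t, φ x := by
    rw [hD_def, integral_sub hf_int.integrableOn hg_int.integrableOn, hIci_a, hIci_b]
    have hunion : Set.Ico (-t) t ∪ Set.Ici t = Set.Ici (-t) :=
      Set.Ico_union_Ici_eq_Ici (by linarith)
    have hdisj : Disjoint (Set.Ico (-t) t) (Set.Ici t) := by
      rw [Set.disjoint_left]
      intro x hx hx2
      exact absurd hx2 (not_le.mpr hx.2)
    rw [← hunion, setIntegral_union hdisj measurableSet_Ici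
      hφ_int.integrableOn hφ_int.integrableOn]
    ring
  have hD_interval : D = ∫ x in (-t)..t, φ x := by
    rw [hD_split, integral_Ico_eq_integral_Ioo,
      intervalIntegral.integral_of_le (by linarith : -t ≤ t),
      integral_Ioc_eq_integral_Ioo]
  -- upper bound: D ≤ 1
  have hD_le_one : D ≤ 1 := by
    rw [hD_split]
    calc ∫ x in Set.Ico (-t) t, φ x ≤ ∫ x, φ x :=
          setIntegral_le_integral hφ_int (Filter.Eventually.of_forall hφ_nonneg)
      _ = 1 := integral_gaussianPDFReal_eq_one 0 hv
  -- formula for φ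
  have hsqrt : Real.sqrt (2 * π * (v:ℝ)) = Real.sqrt (2*π) * σ := by
    rw [hvc, Real.sqrt_mul (by positivity), Real.sqrt_sq hσ.le]
  have hφ_eq : ∀ x, φ x = C * Real.exp (-(x^2/(2*σ^2))) := by
    intro x
    rw [hφ_def]
    unfold gaussianPDFReal
    rw [hsqrt, hvc, hC_def]
    congr 1
    rw [neg_div]
    ring_nf
  -- upper bound: D ≤ 2*t*C
  have hφ_le_C : ∀ x, φ x ≤ C := by
    intro x
    rw [hφ_eq]
    calc C * Real.exp (-(x^2/(2*σ^2))) ≤ C * 1 := by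
          apply mul_le_mul_of_nonneg_left _ hC_pos.le
          rw [Real.exp_le_one_iff]
          rw [neg_nonpos]
          positivity
      _ = C := mul_one C
  have hD_le_2tC : D ≤ 2*t*C := by
    rw [hD_interval]
    calc ∫ x in (-t)..t, φ x ≤ ∫ _x in (-t)..t, C := by
          apply intervalIntegral.integral_mono_on (by linarith)
            (hφ_int.intervalIntegrable) intervalIntegrable_const
          intro x _
          exact hφ_le_C x
      _ = 2*t*C := by
          rw [intervalIntegral.integral_const, smul_eq_mul]
          ring
  -- lower bound
  set t1 : ℝ := min t (σ * Real.sqrt (π/2)) with ht1_def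
  have hsqpi : 0 < Real.sqrt (π/2) := Real.sqrt_pos.mpr (by positivity)
  have ht1_nonneg : 0 ≤ t1 := le_min ht (by positivity)
  have ht1_le : t1 ≤ t := min_le_left _ _
  have hstep1 : ∫ x in (-t1)..t1, φ x ≤ D := by
    rw [hD_interval]
    exact intervalIntegral.integral_mono_interval (by linarith) (by linarith) (by linarith)
      (ae_of_all _ hφ_nonneg) (hφ_int.intervalIntegrable)
  have hpoint : ∀ x : ℝ, C * (1 - x^2/(2*σ^2) + x^4/(8*σ^4) - x^6/(48*σ^6)) ≤ φ x := by
    intro x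
    rw [hφ_eq]
    apply mul_le_mul_of_nonneg_left _ hC_pos.le
    have hw : 0 ≤ x^2/(2*σ^2) := by positivity
    have hb := exp_neg_cubic_bound (x^2/(2*σ^2)) hw
    calc 1 - x^2/(2*σ^2) + x^4/(8*σ^4) - x^6/(48*σ^6)
        = 1 - (x^2/(2*σ^2)) + (x^2/(2*σ^2))^2/2 - (x^2/(2*σ^2))^3/6 := by
          field_simp
          ring
      _ ≤ Real.exp (-(x^2/(2*σ^2))) := hb
  have hstep2 : C * (2*t1 - (2/3)*t1^3/(2*σ^2) + (2/5)*t1^5/(8*σ^4) - (2/7)*t1^7/(48*σ^6))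
      ≤ ∫ x in (-t1)..t1, φ x := by
    have hpint : IntervalIntegrable
        (fun x : ℝ => C * (1 - x^2/(2*σ^2) + x^4/(8*σ^4) - x^6/(48*σ^6))) volume (-t1) t1 := by
      apply Continuous.intervalIntegrable
      fun_prop
    calc C * (2*t1 - (2/3)*t1^3/(2*σ^2) + (2/5)*t1^5/(8*σ^4) - (2/7)*t1^7/(48*σ^6))
        = ∫ x in (-t1)..t1, C * (1 - x^2/(2*σ^2) + x^4/(8*σ^4) - x^6/(48*σ^6)) := by
          rw [intervalIntegral.integral_const_mul, intervalIntegral_poly]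
      _ ≤ ∫ x in (-t1)..t1, φ x := by
          apply intervalIntegral.integral_mono_on (by linarith) hpint
            (hφ_int.intervalIntegrable)
          intro x _
          exact hpoint x
  -- arithmetic with u = t1^2/σ^2
  obtain ⟨u, hu_def⟩ : ∃ u : ℝ, u = t1^2/σ^2 := ⟨_, rfl⟩
  have hu0 : 0 ≤ u := by rw [hu_def]; positivity
  have huπ : u ≤ π/2 := by
    have h1 : t1 ≤ σ * Real.sqrt (π/2) := min_le_right _ _
    have h2 : t1^2 ≤ (σ * Real.sqrt (π/2))^2 := by nlinarith
    have h3 : (σ * Real.sqrt (π/2))^2 = σ^2 * (π/2) := by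
      rw [mul_pow, Real.sq_sqrt (by positivity)]
    rw [hu_def, div_le_iff₀ hσ2]
    rw [h3] at h2
    linarith
  have hkey := key_poly u hu0 huπ
  have heq1 : C * (2*t1 - (2/3)*t1^3/(2*σ^2) + (2/5)*t1^5/(8*σ^4) - (2/7)*t1^7/(48*σ^6))
      = 2*C*t1*(1 - u/6 + u^2/40 - u^3/336) := heq1_aux C t1 σ u (ne_of_gt hσ) hu_def
  have hlow : 0.78 * (2*C*t1) ≤ D := by
    have h1 : 0.78 * (2*C*t1) ≤ 2*C*t1*(1 - u/6 + u^2/40 - u^3/336) := by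
      have h2Ct : 0 ≤ 2*C*t1 := by positivity
      nlinarith
    calc (0.78:ℝ) * (2*C*t1) ≤ 2*C*t1*(1 - u/6 + u^2/40 - u^3/336) := h1
      _ = C * (2*t1 - (2/3)*t1^3/(2*σ^2) + (2/5)*t1^5/(8*σ^4) - (2/7)*t1^7/(48*σ^6)) := heq1.symm
      _ ≤ ∫ x in (-t1)..t1, φ x := hstep2
      _ ≤ D := hstep1
  -- identify the min with 2*C*t1
  have hs2 : Real.sqrt (2*π) = 2 * Real.sqrt (π/2) := by
    rw [show (2:ℝ)*π = 2^2 * (π/2) by ring, Real.sqrt_mul (by positivity),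
      Real.sqrt_sq (by norm_num : (0:ℝ) ≤ 2)]
  have hone_eq : (1:ℝ) = 2*(σ*Real.sqrt (π/2))*C := by
    rw [hC_def, hs2]
    have hsq : Real.sqrt (π/2) ≠ 0 := ne_of_gt hsqpi
    field_simp
  have hmin_eq : min (|a - b| / (Real.sqrt (2 * π) * σ)) 1 = 2*C*t1 := by
    have hdiv : |a - b| / (Real.sqrt (2 * π) * σ) = 2*t*C := by
      rw [habs, div_eq_mul_inv, ← hC_def]
    rw [hdiv, hone_eq]
    rcases le_total t (σ*Real.sqrt (π/2)) with h | h
    · rw [min_eq_left (by nlinarith), ht1_def, min_eq_left h]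
      ring
    · rw [min_eq_right (by nlinarith), ht1_def, min_eq_right h]
      ring
  constructor
  · rw [htv, hmin_eq]
    exact hlow
  · rw [htv, hmin_eq]
    rw [ht1_def]
    rcases le_total t (σ*Real.sqrt (π/2)) with h | h
    · rw [min_eq_left h]
      calc D ≤ 2*t*C := hD_le_2tC
        _ = 2*C*t := by ring
    · rw [min_eq_right h]
      have heq : 2*C*(σ*Real.sqrt (π/2)) = 1 := by rw [hone_eq]; ring
      rw [heq]
      exact hD_le_one

theorem tv_gaussian_l1_bounds (a b : ℝ) (σ : ℝ) (hσ : 0 < σ) :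
    0.78 * min (|a - b| / (Real.sqrt (2 * π) * σ)) 1
      ≤ tvDist (gaussianReal a (Real.toNNReal (σ ^ 2))) (gaussianReal b (Real.toNNReal (σ ^ 2)))
    ∧ tvDist (gaussianReal a (Real.toNNReal (σ ^ 2))) (gaussianReal b (Real.toNNReal (σ ^ 2)))
      ≤ min (|a - b| / (Real.sqrt (2 * π) * σ)) 1 := by
  rcases le_total b a with hab | hab
  · exact tv_gaussian_aux a b σ hσ hab
  · have h := tv_gaussian_aux b a σ hσ hab
    rw [tvDist_comm] at h
    rwa [abs_sub_comm b a] at h
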